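/- Adequacy of the Hoare powerdomain semantics for the non-deterministic λY-calculus with tree constants: interpreting the base type o as the powerset of trees (ordered by inclusion), each tree constructor a of arity k as the pointwise image function (L₁,…,L_k) ↦ {a π₁ ⋯ π_k | π_i ∈ L_i}, choice as union, function types as continuous function spaces, and Y as least fixed point, one has for every closed term t of base type: ⟦t⟧ = {π | t →* π}. -/

import Mathlib

/-- Sorts (simple types): κ ::= o | κ₁ → κ₂. -/
inductive STy where
  | o : STy
  | arr : STy → STy → STy
deriving DecidableEq

/-- The sort o → ⋯ → o → o with n arguments. -/
def tyOfArity : Nat → STy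
  | 0 => .o
  | n + 1 => .arr .o (tyOfArity n)

/-- De Bruijn variables: proofs of membership of a sort in a context. -/
inductive Lk : List STy → STy → Type where
  | hd {Γ κ} : Lk (κ :: Γ) κ
  | tl {Γ κ κ'} : Lk Γ κ → Lk (κ' :: Γ) κ

/-- Intrinsically typed λY-terms over tree constructors α (with arities ar),
    with a binary non-deterministic choice +_κ and fixpoint combinators Y_κ at
    every sort. -/
inductive LTm (α : Type) (ar : α → Nat) : List STy → STy → Type where
  | var {Γ κ} : Lk Γ κ → LTm α ar Γ κ
  | lam {Γ κ₁ κ₂} : LTm α ar (κ₁ :: Γ) κ₂ → LTm α ar Γ (.arr κ₁ κ₂)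
  | app {Γ κ₁ κ₂} : LTm α ar Γ (.arr κ₁ κ₂) → LTm α ar Γ κ₁ → LTm α ar Γ κ₂
  | cht {Γ κ} : LTm α ar Γ (.arr κ (.arr κ κ))
  | fix {Γ κ} : LTm α ar Γ (.arr (.arr κ κ) κ)
  | cst {Γ} (a : α) : LTm α ar Γ (tyOfArity (ar a))

/-- Extension of a renaming under a binder. -/
def extR {Γ Δ : List STy} {κ' : STy} (f : ∀ {κ}, Lk Γ κ → Lk Δ κ) :
    ∀ {κ}, Lk (κ' :: Γ) κ → Lk (κ' :: Δ) κ
  | _, .hd => .hd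
  | _, .tl y => .tl (f y)

/-- Renaming. -/
def LTm.rename {α : Type} {ar : α → Nat} :
    ∀ {Γ Δ : List STy} {κ}, (∀ {κ'}, Lk Γ κ' → Lk Δ κ') →
      LTm α ar Γ κ → LTm α ar Δ κ
  | _, _, _, f, .var x => .var (f x)
  | _, _, _, f, .lam b => .lam (b.rename (fun {_} x => extR (fun y => f y) x))
  | _, _, _, f, .app s t => .app (s.rename f) (t.rename f)
  | _, _, _, _, .cht => .cht
  | _, _, _, _, .fix => .fix
  | _, _, _, _, .cst a => .cst a

/-- Extension of a substitution under a binder. -/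
def extS {α : Type} {ar : α → Nat} {Γ Δ : List STy} {κ' : STy}
    (σ : ∀ {κ}, Lk Γ κ → LTm α ar Δ κ) :
    ∀ {κ}, Lk (κ' :: Γ) κ → LTm α ar (κ' :: Δ) κ
  | _, .hd => .var .hd
  | _, .tl y => (σ y).rename (fun z => .tl z)

/-- Simultaneous substitution. -/
def LTm.subs {α : Type} {ar : α → Nat} :
    ∀ {Γ Δ : List STy} {κ}, (∀ {κ'}, Lk Γ κ' → LTm α ar Δ κ') →
      LTm α ar Γ κ → LTm α ar Δ κ
  | _, _, _, σ, .var x => σ x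
  | _, _, _, σ, .lam b => .lam (b.subs (fun {_} x => extS (fun y => σ y) x))
  | _, _, _, σ, .app s t => .app (s.subs σ) (t.subs σ)
  | _, _, _, _, .cht => .cht
  | _, _, _, _, .fix => .fix
  | _, _, _, _, .cst a => .cst a

/-- The substitution sending the last-bound variable to t. -/
def varCase {α : Type} {ar : α → Nat} {Γ : List STy} {κ₁ : STy}
    (t : LTm α ar Γ κ₁) : ∀ {κ}, Lk (κ₁ :: Γ) κ → LTm α ar Γ κ
  | _, .hd => t
  | _, .tl y => .var y

/-- Substitution of a single term for the last-bound variable. -/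
def subst1 {α : Type} {ar : α → Nat} {Γ : List STy} {κ₁ κ₂ : STy}
    (t : LTm α ar Γ κ₁) (b : LTm α ar (κ₁ :: Γ) κ₂) : LTm α ar Γ κ₂ :=
  b.subs (fun {_} x => varCase t x)

/-- The head of the term is a tree constructor. -/
inductive ConstHead {α : Type} {ar : α → Nat} :
    ∀ {Γ κ}, LTm α ar Γ κ → Prop where
  | cst {Γ a} : ConstHead (Γ := Γ) (.cst a)
  | app {Γ κ₁ κ₂} {s : LTm α ar Γ (.arr κ₁ κ₂)} {t} :
      ConstHead s → ConstHead (.app s t)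

/-- Call-by-name non-deterministic reduction of closed λY-terms: β-reduction,
    Y f → f (Y f), resolution of choices, reduction of the head, and reduction
    of the arguments of a tree constructor. -/
inductive LRed {α : Type} {ar : α → Nat} :
    ∀ {κ}, LTm α ar [] κ → LTm α ar [] κ → Prop where
  | beta {κ₁ κ₂} {b : LTm α ar [κ₁] κ₂} {t} :
      LRed (.app (.lam b) t) (subst1 t b)
  | fixR {κ} {f : LTm α ar [] (.arr κ κ)} :
      LRed (.app .fix f) (.app f (.app .fix f))
  | chL {κ} {s t : LTm α ar [] κ} : LRed (.app (.app .cht s) t) s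
  | chR {κ} {s t : LTm α ar [] κ} : LRed (.app (.app .cht s) t) t
  | appL {κ₁ κ₂} {s s' : LTm α ar [] (.arr κ₁ κ₂)} {t} :
      LRed s s' → LRed (.app s t) (.app s' t)
  | appR {κ₁ κ₂} {s : LTm α ar [] (.arr κ₁ κ₂)} {t t'} :
      ConstHead s → LRed t t' → LRed (.app s t) (.app s t')

/-- Many-step reduction. -/
def LRedStar {α : Type} {ar : α → Nat} {κ : STy} :
    LTm α ar [] κ → LTm α ar [] κ → Prop :=
  Relation.ReflTransGen LRed

/-- Trees over the ranked alphabet (α, ar). -/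
inductive GTree (α : Type) (ar : α → Nat) : Type where
  | mk (a : α) (f : Fin (ar a) → GTree α ar)

/-- Full application of a term of sort o^n → o to n arguments. -/
def appN {α : Type} {ar : α → Nat} :
    ∀ n, LTm α ar [] (tyOfArity n) → (Fin n → LTm α ar [] .o) →
      LTm α ar [] .o
  | 0, t, _ => t
  | n + 1, t, f => appN n (.app t (f 0)) (fun i => f i.succ)

/-- A tree as a closed term of base sort. -/
def GTree.toTm {α : Type} {ar : α → Nat} : GTree α ar → LTm α ar [] .o
  | .mk a f => appN (ar a) (.cst a) (fun i => (f i).toTm)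

/-- The Hoare-powerdomain semantics of sorts: the base sort denotes the
    powerset of trees ordered by inclusion, and arrows denote function
    spaces (ordered pointwise). -/
def Sem (α : Type) (ar : α → Nat) : STy → Type
  | .o => Set (GTree α ar)
  | .arr a b => Sem α ar a → Sem α ar b

noncomputable def semCL (α : Type) (ar : α → Nat) :
    ∀ κ, CompleteLattice (Sem α ar κ)
  | .o => inferInstanceAs (CompleteLattice (Set (GTree α ar)))
  | .arr a b =>
      letI := semCL α ar b
      @Pi.instCompleteLattice (Sem α ar a) (fun _ => Sem α ar b) (fun _ => semCL α ar b)

noncomputable instance {α : Type} {ar : α → Nat} (κ : STy) :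
    CompleteLattice (Sem α ar κ) := semCL α ar κ

/-- The interpretation of a tree constructor of arity n as an iterated
    function, given its action on n sets of trees. -/
def mkConst {α : Type} {ar : α → Nat} :
    ∀ n, ((Fin n → Set (GTree α ar)) → Set (GTree α ar)) →
      Sem α ar (tyOfArity n)
  | 0, F => F Fin.elim0
  | n + 1, F => fun L => mkConst n (fun v => F (Fin.cons L v))

/-- Extension of a semantic environment by one value. -/
def consEnv {α : Type} {ar : α → Nat} {Γ : List STy} {κ₁ : STy}
    (d : Sem α ar κ₁) (ρ : ∀ κ', Lk Γ κ' → Sem α ar κ') :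
    ∀ κ', Lk (κ₁ :: Γ) κ' → Sem α ar κ'
  | _, .hd => d
  | _, .tl y => ρ _ y

/-- Interpretation of λY-terms: choice as union, Y as least (pre)fixed point
    (Knaster–Tarski), tree constructors as pointwise image functions. -/
noncomputable def interp {α : Type} {ar : α → Nat} :
    ∀ {Γ κ}, LTm α ar Γ κ → (∀ κ', Lk Γ κ' → Sem α ar κ') → Sem α ar κ
  | _, _, .var x, ρ => ρ _ x
  | _, _, .lam b, ρ => fun d => interp b (consEnv d ρ)
  | _, _, .app s t, ρ => interp s ρ (interp t ρ)
  | _, _, .cht, _ => fun x y => x ⊔ y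
  | _, _, .fix, _ => fun f => sInf {x | f x ≤ x}
  | _, _, .cst a, _ => mkConst (ar a)
      (fun v => {π | ∃ g, (∀ i, g i ∈ v i) ∧ π = .mk a g})

namespace Adeq
variable {α : Type} {ar : α → Nat}

/-! ### Syntactic lemmas about renaming and substitution -/

def extR' {Γ Δ : List STy} {κ' : STy} (f : ∀ κ, Lk Γ κ → Lk Δ κ) :
    ∀ κ, Lk (κ' :: Γ) κ → Lk (κ' :: Δ) κ :=
  fun _ x => extR (fun {k} y => f k y) x

def extS' {Γ Δ : List STy} {κ' : STy} (σ : ∀ κ, Lk Γ κ → LTm α ar Δ κ) :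
    ∀ κ, Lk (κ' :: Γ) κ → LTm α ar (κ' :: Δ) κ :=
  fun _ x => extS (fun {k} y => σ k y) x

def rn {Γ Δ : List STy} {κ} (f : ∀ κ', Lk Γ κ' → Lk Δ κ') (t : LTm α ar Γ κ) :
    LTm α ar Δ κ :=
  t.rename (fun {k} x => f k x)

def sb {Γ Δ : List STy} {κ} (σ : ∀ κ', Lk Γ κ' → LTm α ar Δ κ') (t : LTm α ar Γ κ) :
    LTm α ar Δ κ :=
  t.subs (fun {k} x => σ k x)

theorem rn_var {Γ Δ κ} (f : ∀ κ', Lk Γ κ' → Lk Δ κ') (x : Lk Γ κ) :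
    rn (α := α) (ar := ar) f (.var x) = .var (f κ x) := rfl

theorem rn_lam {Γ Δ κ₁ κ₂} (f : ∀ κ', Lk Γ κ' → Lk Δ κ') (b : LTm α ar (κ₁ :: Γ) κ₂) :
    rn f (.lam b) = .lam (rn (extR' f) b) := rfl

theorem rn_app {Γ Δ κ₁ κ₂} (f : ∀ κ', Lk Γ κ' → Lk Δ κ') (s : LTm α ar Γ (.arr κ₁ κ₂)) (t) :
    rn f (.app s t) = .app (rn f s) (rn f t) := rfl

theorem sb_var {Γ Δ κ} (σ : ∀ κ', Lk Γ κ' → LTm α ar Δ κ') (x : Lk Γ κ) :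
    sb σ (.var x) = σ κ x := rfl

theorem sb_lam {Γ Δ κ₁ κ₂} (σ : ∀ κ', Lk Γ κ' → LTm α ar Δ κ') (b : LTm α ar (κ₁ :: Γ) κ₂) :
    sb σ (.lam b) = .lam (sb (extS' σ) b) := rfl

theorem sb_app {Γ Δ κ₁ κ₂} (σ : ∀ κ', Lk Γ κ' → LTm α ar Δ κ') (s : LTm α ar Γ (.arr κ₁ κ₂)) (t) :
    sb σ (.app s t) = .app (sb σ s) (sb σ t) := rfl

theorem rn_congr {Γ Δ κ} {f g : ∀ κ', Lk Γ κ' → Lk Δ κ'} (h : ∀ κ' x, f κ' x = g κ' x)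
    (t : LTm α ar Γ κ) : rn f t = rn g t := by
  have : f = g := funext fun κ' => funext (h κ')
  rw [this]

theorem sb_congr {Γ Δ κ} {σ τ : ∀ κ', Lk Γ κ' → LTm α ar Δ κ'} (h : ∀ κ' x, σ κ' x = τ κ' x)
    (t : LTm α ar Γ κ) : sb σ t = sb τ t := by
  have : σ = τ := funext fun κ' => funext (h κ')
  rw [this]

theorem rn_rn : ∀ {Γ κ} (t : LTm α ar Γ κ) {Δ Θ} (f : ∀ κ', Lk Γ κ' → Lk Δ κ')
    (g : ∀ κ', Lk Δ κ' → Lk Θ κ'), rn g (rn f t) = rn (fun κ' x => g κ' (f κ' x)) t := by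
  intro Γ κ t
  induction t with
  | var x => intro Δ Θ f g; rfl
  | lam b ih =>
      intro Δ Θ f g
      rw [rn_lam, rn_lam, rn_lam, ih]
      congr 1
      apply rn_congr
      intro κ' x
      cases x <;> rfl
  | app s t ihs iht => intro Δ Θ f g; rw [rn_app, rn_app, rn_app, ihs, iht]
  | cht => intros; rfl
  | fix => intros; rfl
  | cst a => intros; rfl

theorem rn_sb : ∀ {Γ κ} (t : LTm α ar Γ κ) {Δ Θ} (f : ∀ κ', Lk Γ κ' → Lk Δ κ')
    (σ : ∀ κ', Lk Δ κ' → LTm α ar Θ κ'),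
    sb σ (rn f t) = sb (fun κ' x => σ κ' (f κ' x)) t := by
  intro Γ κ t
  induction t with
  | var x => intros; rfl
  | lam b ih =>
      intro Δ Θ f σ
      rw [rn_lam, sb_lam, sb_lam, ih]
      congr 1
      apply sb_congr
      intro κ' x
      cases x <;> rfl
  | app s t ihs iht => intro Δ Θ f σ; rw [rn_app, sb_app, sb_app, ihs, iht]
  | cht => intros; rfl
  | fix => intros; rfl
  | cst a => intros; rfl

theorem sb_rn : ∀ {Γ κ} (t : LTm α ar Γ κ) {Δ Θ} (σ : ∀ κ', Lk Γ κ' → LTm α ar Δ κ')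
    (g : ∀ κ', Lk Δ κ' → Lk Θ κ'),
    rn g (sb σ t) = sb (fun κ' x => rn g (σ κ' x)) t := by
  intro Γ κ t
  induction t with
  | var x => intros; rfl
  | lam b ih =>
      intro Δ Θ σ g
      rw [sb_lam, rn_lam, sb_lam, ih]
      congr 1
      apply sb_congr
      intro κ' x
      cases x with
      | hd => rfl
      | tl y =>
          show rn (extR' g) (rn (fun k z => Lk.tl z) (σ _ y)) =
            rn (fun k z => Lk.tl z) (rn g (σ _ y))
          rw [rn_rn, rn_rn]
          apply rn_congr
          intro κ'' z
          rfl
  | app s t ihs iht => intro Δ Θ σ g; rw [sb_app, rn_app, sb_app, ihs, iht]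
  | cht => intros; rfl
  | fix => intros; rfl
  | cst a => intros; rfl

theorem sb_sb : ∀ {Γ κ} (t : LTm α ar Γ κ) {Δ Θ} (σ : ∀ κ', Lk Γ κ' → LTm α ar Δ κ')
    (τ : ∀ κ', Lk Δ κ' → LTm α ar Θ κ'),
    sb τ (sb σ t) = sb (fun κ' x => sb τ (σ κ' x)) t := by
  intro Γ κ t
  induction t with
  | var x => intros; rfl
  | lam b ih =>
      intro Δ Θ σ τ
      rw [sb_lam, sb_lam, sb_lam, ih]
      congr 1
      apply sb_congr
      intro κ' x
      cases x with
      | hd => rfl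
      | tl y =>
          show sb (extS' τ) (rn (fun k z => Lk.tl z) (σ _ y)) =
            rn (fun k z => Lk.tl z) (sb τ (σ _ y))
          rw [rn_sb, sb_rn]
          apply sb_congr
          intro κ'' z
          rfl
  | app s t ihs iht => intro Δ Θ σ τ; rw [sb_app, sb_app, sb_app, ihs, iht]
  | cht => intros; rfl
  | fix => intros; rfl
  | cst a => intros; rfl

theorem sb_id : ∀ {Γ κ} (t : LTm α ar Γ κ), sb (fun κ' x => .var x) t = t := by
  intro Γ κ t
  induction t with
  | var x => rfl
  | lam b ih =>
      rw [sb_lam]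
      congr 1
      rw [sb_congr (τ := fun κ' x => .var x) (fun κ' x => by cases x <;> rfl) b, ih]
  | app s t ihs iht => rw [sb_app, ihs, iht]
  | cht => rfl
  | fix => rfl
  | cst a => rfl

/-- The substitution `u · σ`. -/
def consSub {Γ : List STy} {κ₁ : STy} (u : LTm α ar [] κ₁)
    (σ : ∀ κ', Lk Γ κ' → LTm α ar [] κ') : ∀ κ', Lk (κ₁ :: Γ) κ' → LTm α ar [] κ'
  | _, .hd => u
  | _, .tl y => σ _ y

theorem subst1_eq_sb {Γ κ₁ κ₂} (u : LTm α ar Γ κ₁) (b : LTm α ar (κ₁ :: Γ) κ₂) :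
    subst1 u b = sb (fun κ' x => varCase u x) b := rfl

theorem subst1_sb {Γ κ₁ κ₂} (u : LTm α ar [] κ₁) (σ : ∀ κ', Lk Γ κ' → LTm α ar [] κ')
    (b : LTm α ar (κ₁ :: Γ) κ₂) :
    subst1 u (sb (extS' σ) b) = sb (consSub u σ) b := by
  rw [subst1_eq_sb, sb_sb]
  apply sb_congr
  intro κ' x
  cases x with
  | hd => rfl
  | tl y =>
      show sb (fun k z => varCase u z) (rn (fun k z => Lk.tl z) (σ _ y)) = σ _ y
      rw [rn_sb]
      exact (sb_congr (σ := fun κ'' x => varCase u (Lk.tl x)) (τ := fun κ'' x => LTm.var x)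
        (fun κ'' x => rfl) (σ _ y)).trans (sb_id _)

theorem sb_closed {κ} (t : LTm α ar [] κ) (σ : ∀ κ', Lk [] κ' → LTm α ar [] κ') :
    sb σ t = t := by
  rw [sb_congr (τ := fun κ' x => .var x) (fun κ' x => by cases x) t, sb_id]

end Adeq
namespace Adeq
variable {α : Type} {ar : α → Nat}

/-! ### The simulation relation on the semantics -/

def Sim : ∀ κ, Sem α ar κ → Sem α ar κ → Prop
  | .o, d, e => d ≤ e
  | .arr a b, f, g => ∀ x y, Sim a x y → Sim b (f x) (g y)

theorem Sim.le_left : ∀ {κ} {d' d e : Sem α ar κ}, d' ≤ d → Sim κ d e → Sim κ d' e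
  | .o, _, _, _, hle, h => le_trans hle h
  | .arr a b, d', d, e, hle, h => fun x y hxy =>
      Sim.le_left (κ := b) (hle x) (h x y hxy)

theorem Sim.le_right : ∀ {κ} {d e e' : Sem α ar κ}, Sim κ d e → e ≤ e' → Sim κ d e'
  | .o, _, _, _, h, hle => le_trans h hle
  | .arr a b, d, e, e', h, hle => fun x y hxy =>
      Sim.le_right (κ := b) (h x y hxy) (hle y)

theorem sim_iInf : ∀ {κ} {ι : Type} {d : Sem α ar κ} {e : ι → Sem α ar κ},
    (∀ i, Sim κ d (e i)) → Sim κ d (⨅ i, e i)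
  | .o, _, _, _, h => le_iInf h
  | .arr a b, ι, d, e, h => fun x y hxy => by
      have : Sim b (d x) (⨅ i, e i y) := sim_iInf (fun i => h i x y hxy)
      exact cast (congrArg (Sim b (d x)) (show (⨅ i, e i) y = ⨅ i, e i y from iInf_apply).symm) this

theorem sim_iSup : ∀ {κ} {ι : Type} {d : ι → Sem α ar κ} {e : Sem α ar κ},
    (∀ i, Sim κ (d i) e) → Sim κ (⨆ i, d i) e
  | .o, _, _, _, h => iSup_le h
  | .arr a b, ι, d, e, h => fun x y hxy => by
      have : Sim b (⨆ i, d i x) (e y) := sim_iSup (fun i => h i x y hxy)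
      exact cast (congrArg (fun z => Sim b z (e y)) (show (⨆ i, d i) x = ⨆ i, d i x from iSup_apply).symm) this

theorem sim_sInf {κ} {d : Sem α ar κ} {S : Set (Sem α ar κ)}
    (h : ∀ e ∈ S, Sim κ d e) : Sim κ d (sInf S) := by
  rw [show sInf S = ⨅ e : S, (e : Sem α ar κ) from sInf_eq_iInf' S]
  exact sim_iInf (fun e => h e.1 e.2)

theorem sim_sSup {κ} {S : Set (Sem α ar κ)} {e : Sem α ar κ}
    (h : ∀ d ∈ S, Sim κ d e) : Sim κ (sSup S) e := by
  rw [show sSup S = ⨆ d : S, (d : Sem α ar κ) from sSup_eq_iSup' S]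
  exact sim_iSup (fun d => h d.1 d.2)

theorem sim_sup : ∀ {κ} {d d' e e' : Sem α ar κ},
    Sim κ d e → Sim κ d' e' → Sim κ (d ⊔ d') (e ⊔ e')
  | .o, _, _, _, _, h, h' => sup_le_sup h h'
  | .arr a b, d, d', e, e', h, h' => fun x y hxy =>
      sim_sup (κ := b) (h x y hxy) (h' x y hxy)

theorem mkConst_sim : ∀ (n) (F G : (Fin n → Set (GTree α ar)) → Set (GTree α ar)),
    (∀ v w, (∀ i, v i ≤ w i) → F v ≤ G w) →
    Sim (tyOfArity n) (mkConst n F) (mkConst n G)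
  | 0, F, G, h => h _ _ (fun i => i.elim0)
  | n + 1, F, G, h => fun x y hxy =>
      mkConst_sim n _ _ (fun v w hvw => h _ _ (fun i => by
        refine Fin.cases ?_ ?_ i
        · exact hxy
        · intro j; exact hvw j))

/-- Fundamental lemma for the simulation relation. -/
theorem interp_sim {Γ κ} (t : LTm α ar Γ κ) (ρ ρ' : ∀ κ', Lk Γ κ' → Sem α ar κ')
    (h : ∀ κ' x, Sim κ' (ρ κ' x) (ρ' κ' x)) : Sim κ (interp t ρ) (interp t ρ') := by
  induction t  with
  | var x => exact h _ x
  | lam b ih =>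
      intro x y hxy
      exact ih _ _ (fun κ' z => by cases z with
        | hd => exact hxy
        | tl w => exact h _ w)
  | app s t ihs iht => exact ihs ρ ρ' h _ _ (iht ρ ρ' h)
  | cht =>
      intro x y hxy x' y' hxy'
      exact sim_sup hxy hxy'
  | fix =>
      intro F G hFG
      show Sim _ (sInf {x | F x ≤ x}) (sInf {x | G x ≤ x})
      apply sim_sInf
      intro y hy
      have hx : Sim _ (sSup {x | Sim _ x y}) y := sim_sSup (fun d hd => hd)
      have hm : F (sSup {x | Sim _ x y}) ≤ sSup {x | Sim _ x y} :=
        le_sSup (Sim.le_right (hFG _ _ hx) hy)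
      exact Sim.le_left (sInf_le hm) hx
  | cst a =>
      apply mkConst_sim
      rintro v w hvw π ⟨g, hg, rfl⟩
      exact ⟨g, fun i => hvw i (hg i), rfl⟩

end Adeq
namespace Adeq
variable {α : Type} {ar : α → Nat}

/-! ### Semantic substitution lemmas -/

theorem interp_congr {Γ κ} (t : LTm α ar Γ κ) {ρ ρ' : ∀ κ', Lk Γ κ' → Sem α ar κ'}
    (h : ∀ κ' x, ρ κ' x = ρ' κ' x) : interp t ρ = interp t ρ' := by
  have : ρ = ρ' := funext fun κ' => funext (h κ')
  rw [this]

theorem interp_rn : ∀ {Γ κ} (t : LTm α ar Γ κ) {Δ} (f : ∀ κ', Lk Γ κ' → Lk Δ κ')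
    (ρ : ∀ κ', Lk Δ κ' → Sem α ar κ'),
    interp (rn f t) ρ = interp t (fun κ' x => ρ κ' (f κ' x)) := by
  intro Γ κ t
  induction t with
  | var x => intros; rfl
  | lam b ih =>
      intro Δ f ρ
      rw [rn_lam]
      show (fun d => interp (rn (extR' f) b) (consEnv d ρ)) = _
      funext d
      rw [ih]
      exact interp_congr b (fun κ' x => by cases x <;> rfl)
  | app s t ihs iht => intro Δ f ρ; rw [rn_app]; show interp (rn f s) ρ (interp (rn f t) ρ) = _; rw [ihs, iht]; rfl
  | cht => intros; rfl
  | fix => intros; rfl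
  | cst a => intros; rfl

theorem interp_sb : ∀ {Γ κ} (t : LTm α ar Γ κ) {Δ} (σ : ∀ κ', Lk Γ κ' → LTm α ar Δ κ')
    (ρ : ∀ κ', Lk Δ κ' → Sem α ar κ'),
    interp (sb σ t) ρ = interp t (fun κ' x => interp (σ κ' x) ρ) := by
  intro Γ κ t
  induction t with
  | var x => intros; rfl
  | lam b ih =>
      intro Δ σ ρ
      rw [sb_lam]
      show (fun d => interp (sb (extS' σ) b) (consEnv d ρ)) = _
      funext d
      rw [ih]
      refine interp_congr b (fun κ' x => ?_)
      cases x with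
      | hd => rfl
      | tl y =>
          show interp (rn (fun k z => Lk.tl z) (σ _ y)) (consEnv d ρ) = interp (σ _ y) ρ
          rw [interp_rn]
          exact interp_congr _ (fun κ'' z => rfl)
  | app s t ihs iht => intro Δ σ ρ; rw [sb_app]; show interp (sb σ s) ρ (interp (sb σ t) ρ) = _; rw [ihs, iht]; rfl
  | cht => intros; rfl
  | fix => intros; rfl
  | cst a => intros; rfl

theorem interp_subst1 {κ₁ κ₂} (u : LTm α ar [] κ₁) (b : LTm α ar [κ₁] κ₂)
    (ρ : ∀ κ', Lk [] κ' → Sem α ar κ') :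
    interp (subst1 u b) ρ = interp b (consEnv (interp u ρ) ρ) := by
  rw [subst1_eq_sb, interp_sb]
  refine interp_congr b (fun κ' x => ?_)
  cases x with
  | hd => rfl
  | tl y => cases y

/-! ### Soundness of reduction w.r.t. the semantics -/

/-- Reflexivity of `Sim` on definable elements. -/
theorem sim_refl {κ} (t : LTm α ar [] κ) (ρ : ∀ κ', Lk [] κ' → Sem α ar κ') :
    Sim κ (interp t ρ) (interp t ρ) :=
  interp_sim t ρ ρ (fun _ x => by cases x)

theorem red_sim {κ} {s s' : LTm α ar [] κ} (h : LRed s s')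
    (ρ : ∀ κ', Lk [] κ' → Sem α ar κ') :
    Sim κ (interp s' ρ) (interp s ρ) := by
  induction h with
  | @beta κ₁ κ₂ b t =>
      rw [interp_subst1]
      exact interp_sim b _ _ (fun κ' x => by cases x with
        | hd => exact sim_refl t ρ
        | tl y => cases y)
  | @fixR κ' f =>
      show Sim κ' (interp f ρ (sInf {x | interp f ρ x ≤ x})) (sInf {x | interp f ρ x ≤ x})
      apply sim_sInf
      intro y hy
      have hFF := sim_refl f ρ
      have hx : Sim κ' (sSup {x | Sim κ' x y}) y := sim_sSup (fun d hd => hd)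
      have hm : interp f ρ (sSup {x | Sim κ' x y}) ≤ sSup {x | Sim κ' x y} :=
        le_sSup (Sim.le_right (hFF _ _ hx) hy)
      have hLy : Sim κ' (sInf {x | interp f ρ x ≤ x}) y := Sim.le_left (sInf_le hm) hx
      exact Sim.le_right (hFF _ _ hLy) hy
  | @chL κ' s t => exact Sim.le_right (sim_refl s ρ) le_sup_left
  | @chR κ' s t => exact Sim.le_right (sim_refl t ρ) le_sup_right
  | @appL κ₁ κ₂ s s' t hss ih => exact ih _ _ (sim_refl t ρ)
  | @appR κ₁ κ₂ s t t' hc htt ih => exact sim_refl s ρ _ _ ih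

theorem star_sim {s s' : LTm α ar [] .o} (h : LRedStar s s')
    (ρ : ∀ κ', Lk [] κ' → Sem α ar κ') :
    interp s' ρ ≤ interp s ρ := by
  induction h with
  | refl => exact le_rfl
  | tail hst hred ih => exact le_trans (red_sim hred ρ) ih

/-! ### Denotations of trees -/

theorem interp_appN : ∀ (n) (F : (Fin n → Set (GTree α ar)) → Set (GTree α ar))
    (h : LTm α ar [] (tyOfArity n)) (f : Fin n → LTm α ar [] .o)
    (ρ : ∀ κ', Lk [] κ' → Sem α ar κ'),
    interp h ρ = mkConst n F →
    interp (appN n h f) ρ = F (fun i => interp (f i) ρ)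
  | 0, F, h, f, ρ, hh => by
      show interp h ρ = _
      rw [hh]
      exact congrArg F (funext fun i => i.elim0)
  | n + 1, F, h, f, ρ, hh => by
      show interp (appN n (.app h (f 0)) (fun i => f i.succ)) ρ = _
      rw [interp_appN n (fun v => F (Fin.cons (interp (f 0) ρ) v)) (.app h (f 0))
        (fun i => f i.succ) ρ
        (by show interp h ρ (interp (f 0) ρ) = _; rw [hh]; rfl)]
      exact congrArg F (funext fun i => Fin.cases rfl (fun j => rfl) i)

/-- `Sem .o` is a set of trees. -/
def toSet (d : Sem α ar .o) : Set (GTree α ar) := d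

theorem mem_interp_toTm : ∀ (π : GTree α ar) (ρ : ∀ κ', Lk [] κ' → Sem α ar κ'),
    π ∈ toSet (interp π.toTm ρ)
  | .mk a g, ρ => by
      have e : (GTree.mk a g).toTm = appN (ar a) (.cst a) (fun i => (g i).toTm) := rfl
      show GTree.mk a g ∈ toSet (interp (GTree.mk a g).toTm ρ)
      rw [toSet, e, interp_appN (ar a)
        (fun v => {π | ∃ h : Fin (ar a) → GTree α ar, (∀ i, h i ∈ v i) ∧ π = .mk a h})
        (.cst a) _ ρ (by simp [interp])]
      exact ⟨g, fun i => mem_interp_toTm (g i) ρ, rfl⟩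

end Adeq
namespace Adeq
variable {α : Type} {ar : α → Nat}

/-! ### The logical relation between semantics and terms -/

def Rel : ∀ κ, Sem α ar κ → LTm α ar [] κ → Prop
  | .o, d, t => ∀ π ∈ toSet d, LRedStar t π.toTm
  | .arr a b, f, s => ∀ d u, Rel a d u → Rel b (f d) (.app s u)

theorem Rel.anti : ∀ {κ} {d' d : Sem α ar κ} {t}, d' ≤ d → Rel κ d t → Rel κ d' t
  | .o, _, _, _, hle, h => fun π hπ => h π (hle hπ)
  | .arr a b, d', d, t, hle, h => fun e u heu =>
      Rel.anti (κ := b) (hle e) (h e u heu)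

theorem rel_iSup : ∀ {κ} {ι : Type} {d : ι → Sem α ar κ} {t : LTm α ar [] κ},
    (∀ i, Rel κ (d i) t) → Rel κ (⨆ i, d i) t
  | .o, ι, d, t, h => fun π hπ => by
      have : π ∈ ⋃ i, toSet (d i) := by
        rw [← Set.iSup_eq_iUnion]
        exact hπ
      obtain ⟨i, hs⟩ := Set.mem_iUnion.mp this
      exact h i π hs
  | .arr a b, ι, d, t, h => fun e u heu => by
      have : Rel b (⨆ i, d i e) (.app t u) := rel_iSup (fun i => h i e u heu)
      exact cast (congrArg (fun z => Rel b z (.app t u)) (show (⨆ i, d i) e = ⨆ i, d i e from iSup_apply).symm) this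

theorem rel_sSup {κ} {S : Set (Sem α ar κ)} {t : LTm α ar [] κ}
    (h : ∀ d ∈ S, Rel κ d t) : Rel κ (sSup S) t := by
  rw [show sSup S = ⨆ d : S, (d : Sem α ar κ) from sSup_eq_iSup' S]
  exact rel_iSup (fun d => h d.1 d.2)

theorem rel_sup : ∀ {κ} {d d' : Sem α ar κ} {t}, Rel κ d t → Rel κ d' t → Rel κ (d ⊔ d') t
  | .o, d, d', t, h, h' => fun π hπ => by
      rcases (show π ∈ toSet d ∪ toSet d' from hπ) with hd | hd
      · exact h π hd
      · exact h' π hd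
  | .arr a b, d, d', t, h, h' => fun e u heu =>
      rel_sup (κ := b) (h e u heu) (h' e u heu)

theorem Rel.expand : ∀ {κ} {d : Sem α ar κ} {t t' : LTm α ar [] κ},
    LRed t t' → Rel κ d t' → Rel κ d t
  | .o, _, _, _, hr, h => fun π hπ => (h π hπ).head hr
  | .arr a b, d, t, t', hr, h => fun e u heu =>
      Rel.expand (κ := b) (LRed.appL hr) (h e u heu)

/-! ### Reduction lemmas for fully applied constants -/

theorem appN_headRed : ∀ (n) {s s' : LTm α ar [] (tyOfArity n)}
    (us : Fin n → LTm α ar [] .o), LRed s s' → LRed (appN n s us) (appN n s' us)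
  | 0, s, s', us, h => h
  | n + 1, s, s', us, h => appN_headRed n (fun i => us i.succ) (LRed.appL h)

theorem appN_headStar (n) {s s' : LTm α ar [] (tyOfArity n)}
    (us : Fin n → LTm α ar [] .o) (h : LRedStar s s') :
    LRedStar (appN n s us) (appN n s' us) :=
  Relation.ReflTransGen.lift (fun s => appN n s us) (fun _ _ hab => appN_headRed n us hab) _ _ h

theorem appN_argsStar : ∀ (n) (h : LTm α ar [] (tyOfArity n)) (_ : ConstHead h)
    (us vs : Fin n → LTm α ar [] .o), (∀ i, LRedStar (us i) (vs i)) →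
    LRedStar (appN n h us) (appN n h vs)
  | 0, h, _, us, vs, _ => Relation.ReflTransGen.refl
  | n + 1, h, hc, us, vs, hred => by
      have h1 : LRedStar (.app h (us 0)) (.app h (vs 0)) :=
        Relation.ReflTransGen.lift (fun u => LTm.app h u)
          (fun _ _ hab => LRed.appR hc hab) _ _ (hred 0)
      show LRedStar (appN n (.app h (us 0)) (fun i => us i.succ))
        (appN n (.app h (vs 0)) (fun i => vs i.succ))
      exact Relation.ReflTransGen.trans
        (appN_headStar n (fun i => us i.succ) h1)
        (appN_argsStar n (.app h (vs 0)) (ConstHead.app hc)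
          (fun i => us i.succ) (fun i => vs i.succ) (fun i => hred i.succ))

theorem rel_const : ∀ (n) (F : (Fin n → Set (GTree α ar)) → Set (GTree α ar))
    (h : LTm α ar [] (tyOfArity n)),
    (∀ (v : Fin n → Set (GTree α ar)) (us : Fin n → LTm α ar [] .o),
      (∀ i, Rel .o (v i) (us i)) → ∀ π ∈ F v, LRedStar (appN n h us) π.toTm) →
    Rel (tyOfArity n) (mkConst n F) h
  | 0, F, h, H => fun π hπ => H Fin.elim0 Fin.elim0 (fun i => i.elim0) π hπ
  | n + 1, F, h, H => fun d u hdu =>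
      rel_const n (fun v => F (Fin.cons d v)) (.app h u) (fun v us hrel π hπ => by
        have e : appN (n + 1) h (Fin.cons u us) = appN n (.app h u) us := by
          have e0 : (Fin.cons u us : Fin (n + 1) → LTm α ar [] .o) 0 = u := rfl
          have es : (fun i : Fin n => (Fin.cons u us : Fin (n + 1) → LTm α ar [] .o) i.succ)
              = us := funext fun i => rfl
          show appN n (.app h ((Fin.cons u us : Fin (n + 1) → LTm α ar [] .o) 0))
              (fun i => (Fin.cons u us : Fin (n + 1) → LTm α ar [] .o) i.succ) = _
          rw [e0, es]
        rw [← e]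
        exact H (Fin.cons d v) (Fin.cons u us)
          (fun i => Fin.cases hdu hrel i) π hπ)

/-! ### Fundamental lemma for the term relation -/

theorem rel_fund {Γ κ} (t : LTm α ar Γ κ) (σ : ∀ κ', Lk Γ κ' → LTm α ar [] κ')
    (ρ : ∀ κ', Lk Γ κ' → Sem α ar κ')
    (h : ∀ κ' x, Rel κ' (ρ κ' x) (σ κ' x)) : Rel κ (interp t ρ) (sb σ t) := by
  induction t with
  | var x => exact h _ x
  | lam b ih =>
      intro d u hdu
      rw [sb_lam]
      refine Rel.expand LRed.beta ?_
      rw [subst1_sb]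
      exact ih (consSub u σ) (consEnv d ρ) (fun κ' x => by cases x with
        | hd => exact hdu
        | tl y => exact h _ y)
  | app s t ihs iht =>
      rw [sb_app]
      exact ihs σ ρ h _ _ (iht σ ρ h)
  | cht =>
      intro d u hdu d' u' hdu'
      exact rel_sup (Rel.expand LRed.chL hdu) (Rel.expand LRed.chR hdu')
  | fix =>
      intro F s hFs
      show Rel _ (sInf {x | F x ≤ x}) _
      have h1 : Rel _ (sSup {d | Rel _ d (.app (.fix (α := α) (ar := ar)) s)}) (.app .fix s) :=
        rel_sSup (fun d hd => hd)
      have h2 : Rel _ (F (sSup {d | Rel _ d (.app (.fix (α := α) (ar := ar)) s)}))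
          (.app .fix s) := Rel.expand LRed.fixR (hFs _ _ h1)
      exact Rel.anti (sInf_le (le_sSup h2)) h1
  | cst a =>
      refine rel_const (ar a) _ (.cst a) (fun v us hrel π hπ => ?_)
      obtain ⟨g, hg, rfl⟩ := hπ
      have : LRedStar (appN (ar a) (.cst a) us) (appN (ar a) (.cst a) (fun i => (g i).toTm)) :=
        appN_argsStar (ar a) (.cst a) ConstHead.cst us _ (fun i => hrel i _ (hg i))
      exact this

end Adeq
/-- Adequacy of the Hoare powerdomain semantics: for every closed term of base
    sort, its denotation is exactly the set of trees it can reduce to. -/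
theorem stmt10 {α : Type} {ar : α → Nat} (t : LTm α ar [] .o) :
    interp t (fun _ x => nomatch x) = {π : GTree α ar | LRedStar t π.toTm} := by
  have h1 : Adeq.Rel .o (interp t (fun _ x => nomatch x)) t := by
    have := Adeq.rel_fund t (fun _ x => nomatch x) (fun _ x => nomatch x)
      (fun _ x => by cases x)
    rwa [Adeq.sb_closed] at this
  apply Set.Subset.antisymm
  · intro π hπ
    exact h1 π hπ
  · intro π hπ
    exact Adeq.star_sim hπ (fun _ x => nomatch x) (Adeq.mem_interp_toTm π _)
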